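/- There is no unique maximal sufficient environment assumption in general. Concretely, let I = {in1, in2} and O = {out}, and let φ ⊆ Σ^ω be the set of words w such that either (there exists k with in1 ∈ w_k and for all j < k, out ∈ w_j) or (there exists k with in2 ∈ w_k and for all j < k, out ∉ w_j) (i.e., φ is the semantics of (out U in1) ∨ (¬out U in2)). Let ψ1 = {w ∈ Σ^ω : ∃k, in1 ∈ w_k} and ψ2 = {w ∈ Σ^ω : ∃k, in2 ∈ w_k}. Then ψ1 and ψ2 are both sufficient environment assumptions for φ, but their union ψ1 ∪ ψ2 is not a sufficient environment assumption for φ. -/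

import Mathlib

open scoped Classical
noncomputable section

/-! ### Transducers -/

/-- A Moore transducer with input alphabet `Set I` and output alphabet `Set O`. -/
structure Moore (I O : Type) where
  Q : Type
  fin : Finite Q
  qI : Q
  tr : Q → Set I → Q
  out : Q → Set O

namespace Moore

variable {I O : Type} (T : Moore I O)

/-- The run of the transducer over an infinite input word. -/
def run (w : ℕ → Set I) : ℕ → T.Q
  | 0 => T.qI
  | i + 1 => T.tr (run w i) (w i)

/-- The infinite word over `Set I × Set O` generated by the run on `w`. -/
def output (w : ℕ → Set I) : ℕ → Set I × Set O :=
  fun i => (w i, T.out (T.run w i))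

/-- The language of the transducer. -/
def lang : Set (ℕ → Set I × Set O) := {x | ∃ w : ℕ → Set I, x = T.output w}

end Moore

/-- A specification is (Moore) realizable if some Moore transducer
implements it. -/
def MooreRealizable {I O : Type} (L : Set (ℕ → Set I × Set O)) : Prop :=
  ∃ T : Moore I O, T.lang ⊆ L

/-- `ψ` is a sufficient environment assumption for `φ` if `ψᶜ ∪ φ` is
(Moore) realizable. -/
def SufficientAssumption {I O : Type} (φ ψ : Set (ℕ → Set I × Set O)) : Prop :=
  MooreRealizable (ψᶜ ∪ φ)

theorem no_unique_maximal_sufficient_assumption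
    (φ ψ1 ψ2 : Set (ℕ → Set (Fin 2) × Set Unit))
    (hφ : φ = {w | (∃ k : ℕ, (0 : Fin 2) ∈ (w k).1 ∧ ∀ j < k, () ∈ (w j).2) ∨
      (∃ k : ℕ, (1 : Fin 2) ∈ (w k).1 ∧ ∀ j < k, () ∉ (w j).2)})
    (hψ1 : ψ1 = {w | ∃ k : ℕ, (0 : Fin 2) ∈ (w k).1})
    (hψ2 : ψ2 = {w | ∃ k : ℕ, (1 : Fin 2) ∈ (w k).1}) :
    SufficientAssumption φ ψ1 ∧ SufficientAssumption φ ψ2 ∧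
    ¬ SufficientAssumption φ (ψ1 ∪ ψ2) := by

  subst hφ hψ1 hψ2
  refine ⟨?_, ?_, ?_⟩
  · -- constant transducer outputting univ
    refine ⟨⟨Unit, inferInstance, (), fun _ _ => (), fun _ => Set.univ⟩, ?_⟩
    rintro x ⟨w, rfl⟩
    by_cases h : ∃ k : ℕ, (0 : Fin 2) ∈ w k
    · obtain ⟨k, hk⟩ := h
      right
      left
      exact ⟨k, hk, fun j _ => Set.mem_univ ()⟩
    · left
      exact h
  · -- constant transducer outputting ∅
    refine ⟨⟨Unit, inferInstance, (), fun _ _ => (), fun _ => ∅⟩, ?_⟩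
    rintro x ⟨w, rfl⟩
    by_cases h : ∃ k : ℕ, (1 : Fin 2) ∈ w k
    · obtain ⟨k, hk⟩ := h
      right
      right
      exact ⟨k, hk, fun j _ => id⟩
    · left
      exact h
  · rintro ⟨T, hT⟩
    by_cases h0 : () ∈ T.out T.qI
    · -- feed in2 at time 1
      set w : ℕ → Set (Fin 2) := fun n => if n = 1 then {(1 : Fin 2)} else ∅ with hw
      have hx : T.output w ∈ (↑(({w | ∃ k : ℕ, (0:Fin 2) ∈ (w k).1} ∪ {w | ∃ k : ℕ, (1:Fin 2) ∈ (w k).1})ᶜ) ∪ {w | (∃ k : ℕ, (0 : Fin 2) ∈ (w k).1 ∧ ∀ j < k, () ∈ (w j).2) ∨ (∃ k : ℕ, (1 : Fin 2) ∈ (w k).1 ∧ ∀ j < k, () ∉ (w j).2)}) := hT ⟨w, rfl⟩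
      have hwk : ∀ k, (T.output w k).1 = w k := fun k => rfl
      rcases hx with hx | hx
      · exact hx (Or.inr ⟨1, by show (1 : Fin 2) ∈ w 1; simp [hw]⟩)
      · rcases hx with ⟨k, hk, _⟩ | ⟨k, hk, hall⟩
        · rw [hwk] at hk
          simp only [hw] at hk
          split_ifs at hk <;> simp_all
        · rw [hwk] at hk
          have hk1 : k = 1 := by
            by_contra hne
            simp [hw, hne] at hk
          subst hk1
          exact hall 0 one_pos h0
    · -- feed in1 at time 1
      set w : ℕ → Set (Fin 2) := fun n => if n = 1 then {(0 : Fin 2)} else ∅ with hw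
      have hx : T.output w ∈ (↑(({w | ∃ k : ℕ, (0:Fin 2) ∈ (w k).1} ∪ {w | ∃ k : ℕ, (1:Fin 2) ∈ (w k).1})ᶜ) ∪ {w | (∃ k : ℕ, (0 : Fin 2) ∈ (w k).1 ∧ ∀ j < k, () ∈ (w j).2) ∨ (∃ k : ℕ, (1 : Fin 2) ∈ (w k).1 ∧ ∀ j < k, () ∉ (w j).2)}) := hT ⟨w, rfl⟩
      have hwk : ∀ k, (T.output w k).1 = w k := fun k => rfl
      rcases hx with hx | hx
      · exact hx (Or.inl ⟨1, by show (0 : Fin 2) ∈ w 1; simp [hw]⟩)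
      · rcases hx with ⟨k, hk, hall⟩ | ⟨k, hk, _⟩
        · rw [hwk] at hk
          have hk1 : k = 1 := by
            by_contra hne
            simp [hw, hne] at hk
          subst hk1
          exact h0 (hall 0 one_pos)
        · rw [hwk] at hk
          simp only [hw] at hk
          split_ifs at hk <;> simp_all
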